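/- For the diagonal 2×2 operator matrix diag(T₁₁, T₂₂) on H₁ ⊕ H₂, dw(diag(T₁₁,T₂₂)) ≤ max{w(T₁₁) + ‖T₁₁‖², w(T₂₂) + ‖T₂₂‖²}. -/

import Mathlib

open scoped InnerProductSpace

variable {H₁ H₂ : Type*} [NormedAddCommGroup H₁] [InnerProductSpace ℂ H₁] [CompleteSpace H₁]
  [NormedAddCommGroup H₂] [InnerProductSpace ℂ H₂] [CompleteSpace H₂]

noncomputable def numRadius {E : Type*} [NormedAddCommGroup E] [InnerProductSpace ℂ E]
    (S : E →L[ℂ] E) : ℝ :=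
  ⨆ x : {x : E // ‖x‖ = 1}, ‖(⟪S x.1, x.1⟫_ℂ : ℂ)‖

noncomputable def dwRadius {E : Type*} [NormedAddCommGroup E] [InnerProductSpace ℂ E]
    (S : E →L[ℂ] E) : ℝ :=
  ⨆ x : {x : E // ‖x‖ = 1}, Real.sqrt (‖(⟪S x.1, x.1⟫_ℂ : ℂ)‖ ^ 2 + ‖S x.1‖ ^ 4)

/-- The 2×2 block operator matrix `[[T₁₁, T₁₂], [T₂₁, T₂₂]]` on `H₁ ⊕ H₂`. -/
noncomputable def blockOp2 (T₁₁ : H₁ →L[ℂ] H₁) (T₁₂ : H₂ →L[ℂ] H₁)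
    (T₂₁ : H₁ →L[ℂ] H₂) (T₂₂ : H₂ →L[ℂ] H₂) :
    WithLp 2 (H₁ × H₂) →L[ℂ] WithLp 2 (H₁ × H₂) :=
  ((WithLp.prodContinuousLinearEquiv 2 ℂ H₁ H₂).symm : H₁ × H₂ →L[ℂ] WithLp 2 (H₁ × H₂)) ∘L
    ((T₁₁ ∘L ContinuousLinearMap.fst ℂ H₁ H₂ + T₁₂ ∘L ContinuousLinearMap.snd ℂ H₁ H₂).prod
      (T₂₁ ∘L ContinuousLinearMap.fst ℂ H₁ H₂ + T₂₂ ∘L ContinuousLinearMap.snd ℂ H₁ H₂)) ∘L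
    ((WithLp.prodContinuousLinearEquiv 2 ℂ H₁ H₂) : WithLp 2 (H₁ × H₂) →L[ℂ] H₁ × H₂)

lemma numRadius_nonneg {E : Type*} [NormedAddCommGroup E] [InnerProductSpace ℂ E]
    (S : E →L[ℂ] E) : 0 ≤ numRadius S :=
  Real.iSup_nonneg fun _ => norm_nonneg _

lemma numRadius_bdd {E : Type*} [NormedAddCommGroup E] [InnerProductSpace ℂ E]
    (S : E →L[ℂ] E) : BddAbove (Set.range fun x : {x : E // ‖x‖ = 1} =>
      ‖(⟪S x.1, x.1⟫_ℂ : ℂ)‖) := by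
  refine ⟨‖S‖, ?_⟩
  rintro _ ⟨x, rfl⟩
  calc ‖(⟪S x.1, x.1⟫_ℂ : ℂ)‖ ≤ ‖S x.1‖ * ‖x.1‖ := norm_inner_le_norm _ _
    _ ≤ ‖S‖ * ‖x.1‖ * ‖x.1‖ := by
        exact mul_le_mul_of_nonneg_right (S.le_opNorm x.1) (norm_nonneg _)
    _ = ‖S‖ := by rw [x.2]; ring

lemma inner_le_numRadius {E : Type*} [NormedAddCommGroup E] [InnerProductSpace ℂ E]
    (S : E →L[ℂ] E) (x : E) : ‖(⟪S x, x⟫_ℂ : ℂ)‖ ≤ numRadius S * ‖x‖ ^ 2 := by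
  rcases eq_or_ne x 0 with rfl | hx
  · simp [numRadius_nonneg S]
  · have hn : ‖x‖ ≠ 0 := norm_ne_zero_iff.mpr hx
    set u : E := ((‖x‖ : ℂ))⁻¹ • x with hu
    have hc : ‖((‖x‖ : ℂ))⁻¹‖ = ‖x‖⁻¹ := by
      rw [norm_inv, Complex.norm_real, norm_norm]
    have hu1 : ‖u‖ = 1 := by
      rw [hu, norm_smul, hc, inv_mul_cancel₀ hn]
    have hle : ‖(⟪S u, u⟫_ℂ : ℂ)‖ ≤ numRadius S :=
      le_ciSup (numRadius_bdd S) (⟨u, hu1⟩ : {x : E // ‖x‖ = 1})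
    have heq : ‖(⟪S u, u⟫_ℂ : ℂ)‖ = ‖x‖⁻¹ ^ 2 * ‖(⟪S x, x⟫_ℂ : ℂ)‖ := by
      rw [hu, map_smul, inner_smul_left, inner_smul_right, norm_mul, norm_mul,
        RCLike.norm_conj, hc]
      ring
    rw [heq] at hle
    have h2 : ‖x‖ ^ 2 ≠ 0 := pow_ne_zero 2 hn
    calc ‖(⟪S x, x⟫_ℂ : ℂ)‖ = (‖x‖⁻¹ ^ 2 * ‖(⟪S x, x⟫_ℂ : ℂ)‖) * ‖x‖ ^ 2 := by
          field_simp
      _ ≤ numRadius S * ‖x‖ ^ 2 :=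
          mul_le_mul_of_nonneg_right hle (sq_nonneg _)

theorem dw_blockDiag2_le (T₁₁ : H₁ →L[ℂ] H₁) (T₂₂ : H₂ →L[ℂ] H₂) :
    dwRadius (blockOp2 T₁₁ 0 0 T₂₂) ≤
      max (numRadius T₁₁ + ‖T₁₁‖ ^ 2) (numRadius T₂₂ + ‖T₂₂‖ ^ 2) := by
  set M := max (numRadius T₁₁ + ‖T₁₁‖ ^ 2) (numRadius T₂₂ + ‖T₂₂‖ ^ 2) with hM
  have hM0 : 0 ≤ M :=
    le_trans (add_nonneg (numRadius_nonneg T₁₁) (sq_nonneg _)) (le_max_left _ _)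
  refine Real.iSup_le (fun x => ?_) hM0
  obtain ⟨x, hx⟩ := x
  set y := blockOp2 T₁₁ 0 0 T₂₂ x with hy
  have hy1 : y.fst = T₁₁ x.fst := by
    simp [hy, blockOp2]
  have hy2 : y.snd = T₂₂ x.snd := by
    simp [hy, blockOp2]
  have hnormsq : ‖x.fst‖ ^ 2 + ‖x.snd‖ ^ 2 = 1 := by
    rw [← WithLp.prod_norm_sq_eq_of_L2, hx]; norm_num
  have hinner : (⟪y, x⟫_ℂ : ℂ) = ⟪T₁₁ x.fst, x.fst⟫_ℂ + ⟪T₂₂ x.snd, x.snd⟫_ℂ := by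
    rw [WithLp.prod_inner_apply]
    show ⟪y.fst, x.fst⟫_ℂ + ⟪y.snd, x.snd⟫_ℂ = _
    rw [hy1, hy2]
  have hInnerLe : ‖(⟪y, x⟫_ℂ : ℂ)‖ ≤ numRadius T₁₁ * ‖x.fst‖ ^ 2 + numRadius T₂₂ * ‖x.snd‖ ^ 2 := by
    rw [hinner]
    exact le_trans (norm_add_le _ _)
      (add_le_add (inner_le_numRadius T₁₁ x.fst) (inner_le_numRadius T₂₂ x.snd))
  have hNormLe : ‖y‖ ^ 2 ≤ ‖T₁₁‖ ^ 2 * ‖x.fst‖ ^ 2 + ‖T₂₂‖ ^ 2 * ‖x.snd‖ ^ 2 := by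
    rw [WithLp.prod_norm_sq_eq_of_L2, hy1, hy2]
    have h1 : ‖T₁₁ x.fst‖ ^ 2 ≤ ‖T₁₁‖ ^ 2 * ‖x.fst‖ ^ 2 := by
      rw [← mul_pow]; exact pow_le_pow_left₀ (norm_nonneg _) (T₁₁.le_opNorm _) 2
    have h2 : ‖T₂₂ x.snd‖ ^ 2 ≤ ‖T₂₂‖ ^ 2 * ‖x.snd‖ ^ 2 := by
      rw [← mul_pow]; exact pow_le_pow_left₀ (norm_nonneg _) (T₂₂.le_opNorm _) 2
    exact add_le_add h1 h2
  have key : ‖(⟪y, x⟫_ℂ : ℂ)‖ + ‖y‖ ^ 2 ≤ M := by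
    calc ‖(⟪y, x⟫_ℂ : ℂ)‖ + ‖y‖ ^ 2
        ≤ (numRadius T₁₁ + ‖T₁₁‖ ^ 2) * ‖x.fst‖ ^ 2
          + (numRadius T₂₂ + ‖T₂₂‖ ^ 2) * ‖x.snd‖ ^ 2 := by
          have := hInnerLe; have := hNormLe; nlinarith [sq_nonneg ‖x.fst‖, sq_nonneg ‖x.snd‖]
      _ ≤ M * ‖x.fst‖ ^ 2 + M * ‖x.snd‖ ^ 2 := by
          gcongr
          · exact le_max_left _ _
          · exact le_max_right _ _
      _ = M := by rw [← mul_add, hnormsq, mul_one]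
  calc Real.sqrt (‖(⟪y, x⟫_ℂ : ℂ)‖ ^ 2 + ‖y‖ ^ 4)
      ≤ Real.sqrt ((‖(⟪y, x⟫_ℂ : ℂ)‖ + ‖y‖ ^ 2) ^ 2) := by
        apply Real.sqrt_le_sqrt
        nlinarith [norm_nonneg (⟪y, x⟫_ℂ : ℂ), sq_nonneg ‖y‖]
    _ = ‖(⟪y, x⟫_ℂ : ℂ)‖ + ‖y‖ ^ 2 := by
        rw [Real.sqrt_sq (by positivity)]
    _ ≤ M := key
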